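/- arXiv:1101.3832 — 3 statements merged into one kernel-verified Lean document; each statement's English description precedes it below -/
import Mathlib

section
/- For −π/2 < λ < π/2 and f analytic on the unit disk with f(0)=0, f'(0)=1, f nonvanishing except at 0: Re(zf'(z)/f(z)) > 0 on 𝔻 if and only if g = K_{e^{iλ}cos λ}[f] satisfies Re(e^{−iλ}·z g'(z)/g(z)) > 0 on 𝔻. That is, the power deformation with exponent e^{iλ}cos λ carries the starlikeness condition to the λ-spirallikeness condition. -/
open Complex Metric

/-- For `-π/2 < λ < π/2`, a zero-free normalized analytic `f` on the
unit disk is starlike (`Re (z f'/f) > 0`) iff `g = K_{e^{iλ} cos λ}[f]`, given by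
`g z = z * exp ((e^{iλ} cos λ) * L z)`, is `λ`-spirallike:
`Re (e^{-iλ} * z g'/g) > 0` on the punctured disk. -/
theorem power_deformation_spirallike
    (f L : ℂ → ℂ) (lam : ℝ) (hlam1 : -(Real.pi / 2) < lam) (hlam2 : lam < Real.pi / 2)
    (hf : DifferentiableOn ℂ f (ball (0 : ℂ) 1))
    (hf0 : f 0 = 0) (hf'0 : deriv f 0 = 1)
    (hfz : ∀ z ∈ ball (0 : ℂ) 1, z ≠ 0 → f z ≠ 0)
    (hL : DifferentiableOn ℂ L (ball (0 : ℂ) 1))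
    (hL0 : L 0 = 0)
    (hLf : ∀ z ∈ ball (0 : ℂ) 1, z ≠ 0 → Complex.exp (L z) = f z / z) :
    (∀ z ∈ ball (0 : ℂ) 1, z ≠ 0 → 0 < (z * deriv f z / f z).re) ↔
      (∀ z ∈ ball (0 : ℂ) 1, z ≠ 0 →
        0 < (Complex.exp (-(lam : ℂ) * Complex.I) *
              (z * deriv
                (fun w => w * Complex.exp
                  ((Complex.exp ((lam : ℂ) * Complex.I) * (Real.cos lam : ℂ)) * L w)) z /
               (z * Complex.exp
                  ((Complex.exp ((lam : ℂ) * Complex.I) * (Real.cos lam : ℂ)) * L z)))).re) := by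
  have hcos : 0 < Real.cos lam := Real.cos_pos_of_mem_Ioo ⟨hlam1, hlam2⟩
  set c : ℂ := Complex.exp ((lam : ℂ) * Complex.I) * (Real.cos lam : ℂ) with hc
  have key : ∀ z ∈ ball (0 : ℂ) 1, z ≠ 0 →
      (Complex.exp (-(lam : ℂ) * Complex.I) *
        (z * deriv (fun w => w * Complex.exp (c * L w)) z /
          (z * Complex.exp (c * L z)))).re
        = Real.cos lam * (z * deriv f z / f z).re := by
    intro z hz hz0
    have hfz' := hfz z hz hz0
    have hLz := hLf z hz hz0
    have hez : Complex.exp (L z) ≠ 0 := Complex.exp_ne_zero _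
    have hEz : Complex.exp (c * L z) ≠ 0 := Complex.exp_ne_zero _
    have hLd : HasDerivAt L (deriv L z) z :=
      (hL.differentiableAt (isOpen_ball.mem_nhds hz)).hasDerivAt
    have hfd : HasDerivAt f (deriv f z) z :=
      (hf.differentiableAt (isOpen_ball.mem_nhds hz)).hasDerivAt
    -- derivative of L from the relation exp (L w) = f w / w near z
    have hopen : IsOpen (ball (0 : ℂ) 1 ∩ {(0 : ℂ)}ᶜ) :=
      isOpen_ball.inter isOpen_compl_singleton
    have hmem : z ∈ ball (0 : ℂ) 1 ∩ {(0 : ℂ)}ᶜ := ⟨hz, hz0⟩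
    have hev : (fun w => Complex.exp (L w)) =ᶠ[nhds z] (fun w => f w / w) := by
      filter_upwards [hopen.mem_nhds hmem] with w hw
      exact hLf w hw.1 hw.2
    have h1 : HasDerivAt (fun w => Complex.exp (L w))
        (Complex.exp (L z) * deriv L z) z := hLd.cexp
    have h2 : HasDerivAt (fun w => f w / w)
        ((deriv f z * z - f z * 1) / z ^ 2) z := hfd.div (hasDerivAt_id z) hz0
    have h2' : HasDerivAt (fun w => Complex.exp (L w))
        ((deriv f z * z - f z * 1) / z ^ 2) z := h2.congr_of_eventuallyEq hev
    have h3 : Complex.exp (L z) * deriv L z = (deriv f z * z - f z * 1) / z ^ 2 :=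
      h1.unique h2'
    rw [hLz] at h3
    have h4 : f z * deriv L z * z = deriv f z * z - f z := by
      apply mul_right_cancel₀ hz0
      field_simp at h3
      linear_combination z * h3
    have hzl : z * deriv L z = z * deriv f z / f z - 1 := by
      field_simp
      linear_combination h4
    -- derivative of g
    have hE : HasDerivAt (fun w => Complex.exp (c * L w))
        (Complex.exp (c * L z) * (c * deriv L z)) z := (hLd.const_mul c).cexp
    have hg : HasDerivAt (fun w => w * Complex.exp (c * L w))
        (1 * Complex.exp (c * L z) + z * (Complex.exp (c * L z) * (c * deriv L z))) z :=
      (hasDerivAt_id z).mul hE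
    rw [hg.deriv]
    have hquot : z * (1 * Complex.exp (c * L z) + z * (Complex.exp (c * L z) * (c * deriv L z)))
        / (z * Complex.exp (c * L z)) = 1 + c * (z * deriv L z) := by
      field_simp
    rw [hquot, hzl]
    have hei : Complex.exp (-(lam : ℂ) * Complex.I) * c = (Real.cos lam : ℂ) := by
      rw [hc, ← mul_assoc, ← Complex.exp_add]
      ring_nf
      simp
    have : Complex.exp (-(lam : ℂ) * Complex.I) * (1 + c * (z * deriv f z / f z - 1))
        = Complex.exp (-(lam : ℂ) * Complex.I)
          + (Real.cos lam : ℂ) * (z * deriv f z / f z - 1) := by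
      rw [← hei]; ring
    rw [this]
    have hre : (Complex.exp (-(lam : ℂ) * Complex.I)).re = Real.cos lam := by
      have : -(lam : ℂ) * Complex.I = ((-lam : ℝ) : ℂ) * Complex.I := by push_cast; ring
      rw [this, Complex.exp_ofReal_mul_I_re, Real.cos_neg]
    rw [Complex.add_re, hre, Complex.re_ofReal_mul, Complex.sub_re, Complex.one_re]
    ring
  constructor
  · intro h z hz hz0
    rw [key z hz hz0]
    exact mul_pos hcos (h z hz hz0)
  · intro h z hz hz0
    have := h z hz hz0
    rw [key z hz hz0] at this
    nlinarith
end

section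
/- Let M be a class of functions f analytic on 𝔻 with f(0)=0, f'(0)=1, f nonvanishing off 0, and let V(M) = {zf'(z)/f(z) : f ∈ M, z ∈ 𝔻}. Then the set of c ∈ ℂ such that K_c[f] has nonvanishing derivative on 𝔻 for every f ∈ M equals ℂ \ T(V(M)), where T(w) = 1/(1−w) (with T(1) = ∞ excluded from ℂ). -/
open Complex Metric Set

/-- Derivative of `w ↦ w * exp (c * L w)`. -/
lemma derivK_aux (c : ℂ) (L : ℂ → ℂ) (z : ℂ) (hL : DifferentiableAt ℂ L z) :
    deriv (fun w => w * Complex.exp (c * L w)) z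
      = Complex.exp (c * L z) * (1 + c * z * deriv L z) := by
  have h1 : HasDerivAt (fun w => c * L w) (c * deriv L z) z :=
    hL.hasDerivAt.const_mul c
  have h2 : HasDerivAt (fun w => Complex.exp (c * L w))
      (Complex.exp (c * L z) * (c * deriv L z)) z := h1.cexp
  have h3 := (hasDerivAt_id z).mul h2
  have h4 := h3.deriv
  simp only [id_eq] at h4
  rw [show (fun w : ℂ => w * Complex.exp (c * L w)) = (id * fun w => Complex.exp (c * L w)) from rfl, h4]
  ring

/-- Relation between the logarithmic derivatives. -/
lemma derivL_aux (f L : ℂ → ℂ) (z : ℂ) (hz : z ∈ ball (0 : ℂ) 1) (hz0 : z ≠ 0)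
    (hf : DifferentiableAt ℂ f z) (hL : DifferentiableAt ℂ L z)
    (hfz : f z ≠ 0)
    (hexp : ∀ w ∈ ball (0 : ℂ) 1, w ≠ 0 → Complex.exp (L w) = f w / w) :
    z * deriv L z = z * deriv f z / f z - 1 := by
  have hev : (fun w => Complex.exp (L w)) =ᶠ[nhds z] fun w => f w / w := by
    filter_upwards [IsOpen.mem_nhds (isOpen_ball.inter isOpen_compl_singleton)
      ⟨hz, hz0⟩] with w hw
    exact hexp w hw.1 hw.2
  have h1 : deriv (fun w => Complex.exp (L w)) z = Complex.exp (L z) * deriv L z :=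
    hL.hasDerivAt.cexp.deriv
  have h2 : deriv (fun w => f w / w) z = (deriv f z * z - f z * 1) / z ^ 2 :=
    (hf.hasDerivAt.div (hasDerivAt_id z) hz0).deriv
  have h3 := hev.deriv_eq
  rw [h1, h2, hexp z hz hz0] at h3
  have hz2 : z ^ 2 ≠ 0 := pow_ne_zero 2 hz0
  field_simp at h3
  have h4 : f z * (z * deriv L z) = deriv f z * z - f z :=
    mul_left_cancel₀ hz0 (by linear_combination z * h3)
  rw [eq_sub_iff_add_eq, eq_div_iff hfz]
  linear_combination h4

/-- Let `M` be a class of zero-free normalized analytic functions on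
the unit disk (each recorded together with the branch `L` of `log (f z / z)` vanishing
at the origin).  Let `V(M) = {z f'(z)/f(z) : (f,L) ∈ M, z ∈ 𝔻, z ≠ 0}`.  Then
`{c : K_c[f]' never vanishes on 𝔻 for all f ∈ M} = ℂ \ T(V(M))`, where
`T w = 1/(1-w)` (the value `T 1 = ∞` being excluded from `ℂ`). -/
theorem exponent_set_eq_complement_of_T_image
    (M : Set ((ℂ → ℂ) × (ℂ → ℂ)))
    (hM : ∀ p ∈ M,
      DifferentiableOn ℂ p.1 (ball (0 : ℂ) 1) ∧ p.1 0 = 0 ∧ deriv p.1 0 = 1 ∧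
      (∀ z ∈ ball (0 : ℂ) 1, z ≠ 0 → p.1 z ≠ 0) ∧
      DifferentiableOn ℂ p.2 (ball (0 : ℂ) 1) ∧ p.2 0 = 0 ∧
      (∀ z ∈ ball (0 : ℂ) 1, z ≠ 0 → Complex.exp (p.2 z) = p.1 z / z)) :
    {c : ℂ | ∀ p ∈ M, ∀ z ∈ ball (0 : ℂ) 1,
        deriv (fun w => w * Complex.exp (c * p.2 w)) z ≠ 0}
      = {c : ℂ | ∃ w ∈ {w : ℂ | ∃ p ∈ M, ∃ z ∈ ball (0 : ℂ) 1,
            z ≠ 0 ∧ w = z * deriv p.1 z / p.1 z},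
          w ≠ 1 ∧ c = 1 / (1 - w)}ᶜ := by
  ext c
  simp only [mem_setOf_eq, mem_compl_iff, not_exists, not_and]
  constructor
  · rintro H w ⟨p, hp, z, hz, hz0, hw⟩ hw1 hc
    obtain ⟨hfd, -, -, hfne, hLd, -, hexp⟩ := hM p hp
    have hLz : DifferentiableAt ℂ p.2 z := hLd.differentiableAt (isOpen_ball.mem_nhds hz)
    have hfz : DifferentiableAt ℂ p.1 z := hfd.differentiableAt (isOpen_ball.mem_nhds hz)
    have hkey := derivL_aux p.1 p.2 z hz hz0 hfz hLz (hfne z hz hz0) hexp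
    have hderiv := derivK_aux c p.2 z hLz
    refine H p hp z hz ?_
    rw [hderiv]
    have hzw : z * deriv p.2 z = w - 1 := by rw [hkey, hw]
    have h1w : (1 : ℂ) - w ≠ 0 := sub_ne_zero.mpr (Ne.symm hw1)
    have this : 1 + c * (w - 1) = 0 := by
      rw [hc]; field_simp; ring
    rw [mul_assoc, hzw, this, mul_zero]
  · intro H p hp z hz
    obtain ⟨hfd, -, -, hfne, hLd, -, hexp⟩ := hM p hp
    have hLz : DifferentiableAt ℂ p.2 z := hLd.differentiableAt (isOpen_ball.mem_nhds hz)
    rw [derivK_aux c p.2 z hLz]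
    intro hcontra
    rcases mul_eq_zero.mp hcontra with h | h
    · exact Complex.exp_ne_zero _ h
    · rcases eq_or_ne z 0 with rfl | hz0
      · simp at h
      · have hfz : DifferentiableAt ℂ p.1 z := hfd.differentiableAt (isOpen_ball.mem_nhds hz)
        have hkey := derivL_aux p.1 p.2 z hz hz0 hfz hLz (hfne z hz hz0) hexp
        set w := z * deriv p.1 z / p.1 z with hwdef
        have hzw : z * deriv p.2 z = w - 1 := by rw [hkey]
        rw [mul_assoc, hzw] at h
        have hw1 : w ≠ 1 := by
          intro h1
          rw [h1] at h; simp at h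
        have h1w : (1 : ℂ) - w ≠ 0 := sub_ne_zero.mpr (Ne.symm hw1)
        have hc : c = 1 / (1 - w) := by
          field_simp
          linear_combination -h
        exact H w ⟨p, hp, z, hz, hz0, rfl⟩ hw1 hc
end

section
/- The set of c ∈ ℂ for which the power deformation K_c[k] of the Koebe function k(z)=z/(1−z)² has nonvanishing derivative on the unit disk equals the closed disk of radius 1/2 centered at 1/2, i.e., {c : |c − 1/2| ≤ 1/2}. -/
open Complex Metric Set

/-- For the Koebe function `k z = z/(1-z)²` with branch `L` of
`log (k z / z)` vanishing at the origin, the set of `c ∈ ℂ` for which the power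
deformation `K_c[k] z = z * exp (c * L z)` has nonvanishing derivative on the unit
disk equals the closed disk `{c : |c - 1/2| ≤ 1/2}`. -/
theorem koebe_power_deformation_exponents
    (L : ℂ → ℂ)
    (hL : DifferentiableOn ℂ L (ball (0 : ℂ) 1))
    (hL0 : L 0 = 0)
    (hLk : ∀ z ∈ ball (0 : ℂ) 1, z ≠ 0 →
      Complex.exp (L z) = (z / (1 - z) ^ 2) / z) :
    {c : ℂ | ∀ z ∈ ball (0 : ℂ) 1,
        deriv (fun w => w * Complex.exp (c * L w)) z ≠ 0}
      = closedBall ((1 : ℂ) / 2) (1 / 2) := by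
  have hball : ∀ z ∈ ball (0:ℂ) 1, (1 : ℂ) - z ≠ 0 := by
    intro z hz h
    have hz1 : z = 1 := by linear_combination -h
    rw [hz1] at hz
    simp [mem_ball, dist_eq] at hz
  have hexp : ∀ z ∈ ball (0:ℂ) 1, Complex.exp (L z) = 1 / (1 - z)^2 := by
    intro z hz
    rcases eq_or_ne z 0 with rfl | hz0
    · simp [hL0]
    · rw [hLk z hz hz0]
      field_simp
  have hLd : ∀ z ∈ ball (0:ℂ) 1, HasDerivAt L (2 / (1 - z)) z := by
    intro z hz
    have hne := hball z hz
    have hLdA : DifferentiableAt ℂ L z := hL.differentiableAt (isOpen_ball.mem_nhds hz)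
    have h1 : HasDerivAt (fun w => Complex.exp (L w)) (Complex.exp (L z) * deriv L z) z :=
      hLdA.hasDerivAt.cexp
    have h2 : HasDerivAt (fun w : ℂ => 1 / (1 - w)^2) (2 / (1 - z)^3) z := by
      have hs : HasDerivAt (fun w : ℂ => 1 - w) (-1) z := by
        simpa using (hasDerivAt_id z).const_sub 1
      have ha : HasDerivAt (fun w : ℂ => (1 - w)^2) (2 * (1 - z) * (-1)) z := by
        simpa using hs.fun_pow 2
      have hb := ha.fun_inv (pow_ne_zero 2 hne)
      convert hb using 1
      · rfl
      · rfl
      · ext w; simp [one_div]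
      · field_simp
    have heq : (fun w => Complex.exp (L w)) =ᶠ[nhds z] fun w : ℂ => 1 / (1 - w)^2 := by
      filter_upwards [isOpen_ball.mem_nhds hz] with w hw using hexp w hw
    have h1' : HasDerivAt (fun w : ℂ => 1 / (1 - w)^2) (Complex.exp (L z) * deriv L z) z :=
      h1.congr_of_eventuallyEq heq.symm
    have hderiv_eq : Complex.exp (L z) * deriv L z = 2 / (1 - z)^3 := h1'.unique h2
    have hdL : deriv L z = 2 / (1 - z) := by
      rw [hexp z hz] at hderiv_eq
      field_simp at hderiv_eq
      have h3 : (deriv L z * (1 - z)) * (1 - z)^2 = 2 * (1 - z)^2 := by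
        linear_combination (1 - z)^2 * hderiv_eq
      have h4 := mul_right_cancel₀ (pow_ne_zero 2 hne) h3
      rw [eq_div_iff hne]
      exact h4
    rw [← hdL]
    exact hLdA.hasDerivAt
  have hfd : ∀ c : ℂ, ∀ z ∈ ball (0:ℂ) 1,
      HasDerivAt (fun w => w * Complex.exp (c * L w))
        (Complex.exp (c * L z) * (1 + 2 * c * z / (1 - z))) z := by
    intro c z hz
    have h1 : HasDerivAt (fun w => Complex.exp (c * L w))
        (Complex.exp (c * L z) * (c * (2 / (1 - z)))) z :=
      ((hLd z hz).const_mul c).cexp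
    have h2 := (hasDerivAt_id z).mul h1
    convert h2 using 1
    · rfl
    · rfl
    · rfl
    simp only [id_eq]
    ring
  ext c
  simp only [mem_setOf_eq, mem_closedBall]
  constructor
  · intro h
    by_contra hc
    push_neg at hc
    have habs : 1 < ‖2 * c - 1‖ := by
      have : ‖2 * c - 1‖ = 2 * dist c (1/2) := by
        rw [dist_eq]
        rw [← Complex.norm_two, ← norm_mul]
        ring_nf
      rw [this]; linarith
    have h2c : (2 * c - 1 : ℂ) ≠ 0 := by
      intro h0
      rw [h0] at habs
      norm_num at habs
    set z0 : ℂ := -(1 / (2 * c - 1)) with hz0def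
    have hz0 : z0 ∈ ball (0:ℂ) 1 := by
      simp only [mem_ball, dist_zero_right, hz0def, norm_neg, norm_div, norm_one]
      rw [div_lt_one (by linarith)]
      simpa using habs
    have hne := hball z0 hz0
    refine absurd ((hfd c z0 hz0).deriv) ?_
    intro hd
    apply h z0 hz0
    rw [hd]
    have hnum : (1 - z0) + 2 * c * z0 = 0 := by
      rw [hz0def]
      field_simp
      ring
    have hkey : 1 + 2 * c * z0 / (1 - z0) = 0 := by
      have hrw : 1 + 2 * c * z0 / (1 - z0) = ((1 - z0) + 2 * c * z0) / (1 - z0) := by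
        field_simp
      rw [hrw, hnum, zero_div]
    rw [hkey, mul_zero]
  · intro h z hz
    rw [(hfd c z hz).deriv]
    have hne := hball z hz
    intro h0
    have hkey : 1 + 2 * c * z / (1 - z) = 0 := by
      rcases mul_eq_zero.mp h0 with h1 | h1
      · exact absurd h1 (Complex.exp_ne_zero _)
      · exact h1
    have hz1 : z * (2 * c - 1) = -1 := by
      have := hkey
      field_simp at this
      linear_combination this
    have habs : ‖z‖ * ‖2 * c - 1‖ = 1 := by
      rw [← norm_mul, hz1]
      simp
    have hzlt : ‖z‖ < 1 := by
      simpa [mem_ball, dist_zero_right] using hz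
    have hcle : ‖2 * c - 1‖ ≤ 1 := by
      have hd : ‖2 * c - 1‖ = 2 * dist c (1/2) := by
        rw [dist_eq]
        rw [← Complex.norm_two, ← norm_mul]
        ring_nf
      rw [hd]; linarith
    nlinarith [norm_nonneg z, norm_nonneg (2 * c - 1)]
end
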